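/- Let $k\geq 1$ be an integer and let $-1<\beta<\alpha<0$ be real numbers. Define $E_k(t)=F(-\beta,k-\alpha;k+1;t)$ and $F_1(t)=F(-\alpha,1-\beta;2;t)$, where $F$ is the Gauss hypergeometric series. Then the function $t\mapsto E_k(t)/F_1(t)$ is strictly increasing on $(0,1)$. -/
import Mathlib


/-- Pochhammer symbol `(a)_n = a (a+1) ⋯ (a+n-1)` for a real number `a`. -/
noncomputable def poch (a : ℝ) (n : ℕ) : ℝ := ∏ i ∈ Finset.range n, (a + i)

/-- Gauss hypergeometric series `F(a,b;c;x) = ∑ (a)_n (b)_n / ((c)_n n!) xⁿ`. -/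
noncomputable def hyperg (a b c x : ℝ) : ℝ :=
  ∑' n : ℕ, poch a n * poch b n / (poch c n * (Nat.factorial n : ℝ)) * x ^ n

lemma poch_succ (a : ℝ) (n : ℕ) : poch a (n+1) = poch a n * (a + n) :=
  Finset.prod_range_succ _ _

lemma poch_pos {a : ℝ} (ha : 0 < a) (n : ℕ) : 0 < poch a n :=
  Finset.prod_pos fun i _ => by positivity

lemma poch_one (n : ℕ) : poch 1 n = (Nat.factorial n : ℝ) := by
  induction n with
  | zero => simp [poch]
  | succ n ih => rw [poch_succ, ih, Nat.factorial_succ]; push_cast; ring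

lemma poch_le_poch {a b : ℝ} (ha : 0 < a) (hab : a ≤ b) (n : ℕ) :
    poch a n ≤ poch b n :=
  Finset.prod_le_prod (fun i _ => by positivity) (fun i _ => by linarith)

/-- coefficient of `E_k`. -/
noncomputable def coA (s aa K : ℝ) (n : ℕ) : ℝ :=
  poch s n * poch (K + aa) n / (poch (K + 1) n * (Nat.factorial n : ℝ))

/-- coefficient of `F_1`. -/
noncomputable def coB (s aa : ℝ) (n : ℕ) : ℝ :=
  poch aa n * poch (1 + s) n / (poch 2 n * (Nat.factorial n : ℝ))

section coeffs
variable {s aa K : ℝ} (hs0 : 0 < aa) (has : aa < s) (hs1 : s < 1) (hK : 1 ≤ K)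
include hs0 has hs1 hK

lemma coA_pos (n : ℕ) : 0 < coA s aa K n := by
  have h1 : 0 < s := hs0.trans has
  have : (0:ℝ) < Nat.factorial n := by positivity
  exact div_pos (mul_pos (poch_pos h1 n) (poch_pos (by linarith) n))
    (mul_pos (poch_pos (by linarith) n) this)

lemma coA_le_one (n : ℕ) : coA s aa K n ≤ 1 := by
  have h1 : 0 < s := hs0.trans has
  have hf : (0:ℝ) < Nat.factorial n := by positivity
  rw [coA, div_le_one (mul_pos (poch_pos (by linarith : (0:ℝ) < K + 1) n) hf)]
  calc poch s n * poch (K + aa) n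
      ≤ poch 1 n * poch (K + 1) n := by
        apply mul_le_mul (poch_le_poch h1 (by linarith) n)
          (poch_le_poch (by linarith) (by linarith) n)
          (poch_pos (by linarith) n).le (poch_pos (by norm_num) n).le
    _ = poch (K + 1) n * (Nat.factorial n : ℝ) := by rw [poch_one]; ring

lemma coB_pos (n : ℕ) : 0 < coB s aa n := by
  have : (0:ℝ) < Nat.factorial n := by positivity
  exact div_pos (mul_pos (poch_pos hs0 n) (poch_pos (by linarith) n))
    (mul_pos (poch_pos (by norm_num) n) this)

lemma coB_le_one (n : ℕ) : coB s aa n ≤ 1 := by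
  have hf : (0:ℝ) < Nat.factorial n := by positivity
  rw [coB, div_le_one (mul_pos (poch_pos (by norm_num : (0:ℝ) < 2) n) hf)]
  calc poch aa n * poch (1 + s) n
      ≤ poch 1 n * poch 2 n := by
        apply mul_le_mul (poch_le_poch hs0 (by linarith) n)
          (poch_le_poch (by linarith) (by linarith) n)
          (poch_pos (by linarith) n).le (poch_pos (by norm_num) n).le
    _ = poch 2 n * (Nat.factorial n : ℝ) := by rw [poch_one]; ring

/-- The key step inequality. -/
lemma step (n : ℕ) : coA s aa K n * coB s aa (n+1) < coA s aa K (n+1) * coB s aa n := by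
  have h1 : 0 < s := hs0.trans has
  have hp1 : 0 < poch s n := poch_pos h1 n
  have hp2 : 0 < poch (K + aa) n := poch_pos (by linarith) n
  have hp3 : 0 < poch (K + 1) n := poch_pos (by linarith) n
  have hp4 : 0 < poch aa n := poch_pos hs0 n
  have hp5 : 0 < poch (1 + s) n := poch_pos (by linarith) n
  have hp6 : 0 < poch 2 n := poch_pos (by norm_num) n
  have hf : (0:ℝ) < Nat.factorial n := by positivity
  have hn : (0:ℝ) ≤ (n:ℝ) := Nat.cast_nonneg n
  simp only [coA, coB, poch_succ, Nat.factorial_succ]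
  push_cast
  rw [div_mul_div_comm, div_mul_div_comm, div_lt_div_iff₀ (by positivity) (by positivity)]
  have hA : 0 < (K - 1) * (1 - aa) + (s - aa) := by
    have := mul_nonneg (sub_nonneg.2 hK) (by linarith : (0:ℝ) ≤ 1 - aa)
    linarith
  have h2 : (0:ℝ) ≤ 2 * s - aa - s * aa := by
    have := mul_nonneg h1.le (by linarith : (0:ℝ) ≤ 1 - aa)
    nlinarith
  have hB : 0 < (K - 1) * (2 * s - aa - s * aa) + 2 * (s - aa) := by
    have := mul_nonneg (sub_nonneg.2 hK) h2
    linarith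
  have core : ((n:ℝ) + aa) * ((n:ℝ) + 1 + s) * ((n:ℝ) + K + 1)
      < ((n:ℝ) + s) * ((n:ℝ) + K + aa) * ((n:ℝ) + 2) := by
    nlinarith [mul_nonneg hn hA.le, hB]
  have hC : (0:ℝ) < poch s n * poch (K + aa) n * poch aa n * poch (1 + s) n *
      poch (K + 1) n * poch 2 n * (Nat.factorial n : ℝ) * (Nat.factorial n : ℝ) *
      (((n:ℝ) + 1)) := by positivity
  nlinarith [mul_lt_mul_of_pos_left core hC]

end coeffs

section coeffs2
variable {s aa K : ℝ} (hs0 : 0 < aa) (has : aa < s) (hs1 : s < 1) (hK : 1 ≤ K)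
include hs0 has hs1 hK

lemma cross {n m : ℕ} (hnm : n < m) :
    coA s aa K n * coB s aa m < coA s aa K m * coB s aa n := by
  have mono : StrictMono (fun n => coA s aa K n / coB s aa n) := by
    apply strictMono_nat_of_lt_succ
    intro n
    rw [div_lt_div_iff₀ (coB_pos hs0 has hs1 hK n) (coB_pos hs0 has hs1 hK (n+1))]
    exact step hs0 has hs1 hK n
  exact (div_lt_div_iff₀ (coB_pos hs0 has hs1 hK n) (coB_pos hs0 has hs1 hK m)).1 (mono hnm)

end coeffs2

lemma summable_coeff {c : ℕ → ℝ} (h0 : ∀ n, 0 ≤ c n) (h1 : ∀ n, c n ≤ 1) {t : ℝ}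
    (ht : |t| < 1) : Summable (fun n => c n * t ^ n) := by
  apply Summable.of_norm
  apply Summable.of_nonneg_of_le (fun n => norm_nonneg _) (fun n => ?_)
    (summable_geometric_of_lt_one (abs_nonneg t) ht)
  rw [norm_mul, norm_pow]
  calc ‖c n‖ * ‖t‖ ^ n ≤ 1 * ‖t‖ ^ n := by
        apply mul_le_mul_of_nonneg_right _ (by positivity)
        rw [Real.norm_eq_abs, abs_of_nonneg (h0 n)]; exact h1 n
    _ = |t| ^ n := by rw [one_mul, Real.norm_eq_abs]

lemma pow_cross {x y : ℝ} (hx : 0 < x) (hxy : x < y) {n m : ℕ} (hnm : n < m) :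
    x ^ m * y ^ n < y ^ m * x ^ n := by
  obtain ⟨d, rfl⟩ : ∃ d, m = n + (d + 1) := ⟨m - n - 1, by omega⟩
  have h1 : x ^ (d+1) < y ^ (d+1) := pow_lt_pow_left₀ hxy hx.le (by omega)
  have hy : 0 < y := hx.trans hxy
  have h2 : (0:ℝ) < (x*y) ^ n := by positivity
  calc x ^ (n + (d+1)) * y ^ n = (x*y)^n * x^(d+1) := by ring
    _ < (x*y)^n * y^(d+1) := by exact mul_lt_mul_of_pos_left h1 h2
    _ = y ^ (n + (d+1)) * x ^ n := by ring

lemma key_ineq {s aa K : ℝ} (hs0 : 0 < aa) (has : aa < s) (hs1 : s < 1) (hK : 1 ≤ K)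
    {x y : ℝ} (hx : 0 < x) (hxy : x < y) (hy1 : y < 1) :
    (∑' n, coA s aa K n * x ^ n) * (∑' n, coB s aa n * y ^ n)
      < (∑' n, coA s aa K n * y ^ n) * (∑' n, coB s aa n * x ^ n) := by
  have hy : 0 < y := hx.trans hxy
  have hx1 : x < 1 := hxy.trans hy1
  have habsx : |x| < 1 := by rw [abs_of_pos hx]; exact hx1
  have habsy : |y| < 1 := by rw [abs_of_pos hy]; exact hy1
  set fax : ℕ → ℝ := fun n => coA s aa K n * x ^ n with hfax
  set fay : ℕ → ℝ := fun n => coA s aa K n * y ^ n with hfay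
  set fbx : ℕ → ℝ := fun n => coB s aa n * x ^ n with hfbx
  set fby : ℕ → ℝ := fun n => coB s aa n * y ^ n with hfby
  have hAnn : ∀ n, 0 ≤ coA s aa K n := fun n => (coA_pos hs0 has hs1 hK n).le
  have hBnn : ∀ n, 0 ≤ coB s aa n := fun n => (coB_pos hs0 has hs1 hK n).le
  have sax : Summable fax := summable_coeff hAnn (coA_le_one hs0 has hs1 hK) habsx
  have say : Summable fay := summable_coeff hAnn (coA_le_one hs0 has hs1 hK) habsy
  have sbx : Summable fbx := summable_coeff hBnn (coB_le_one hs0 has hs1 hK) habsx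
  have sby : Summable fby := summable_coeff hBnn (coB_le_one hs0 has hs1 hK) habsy
  have nax : 0 ≤ fax := fun n => mul_nonneg (hAnn n) (by positivity)
  have nay : 0 ≤ fay := fun n => mul_nonneg (hAnn n) (by positivity)
  have nbx : 0 ≤ fbx := fun n => mul_nonneg (hBnn n) (by positivity)
  have nby : 0 ≤ fby := fun n => mul_nonneg (hBnn n) (by positivity)
  have sp1 : Summable (fun p : ℕ × ℕ => fay p.1 * fbx p.2) :=
    Summable.mul_of_nonneg say sbx nay nbx
  have sp2 : Summable (fun p : ℕ × ℕ => fax p.1 * fby p.2) :=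
    Summable.mul_of_nonneg sax sby nax nby
  have e1 : (∑' n, fay n) * (∑' n, fbx n) = ∑' p : ℕ × ℕ, fay p.1 * fbx p.2 :=
    Summable.tsum_mul_tsum say sbx sp1
  have e2 : (∑' n, fax n) * (∑' n, fby n) = ∑' p : ℕ × ℕ, fax p.1 * fby p.2 :=
    Summable.tsum_mul_tsum sax sby sp2
  set F : ℕ × ℕ → ℝ := fun p => fay p.1 * fbx p.2 - fax p.1 * fby p.2 with hF
  have sF : Summable F := sp1.sub sp2
  have eF : (∑' n, fay n) * (∑' n, fbx n) - (∑' n, fax n) * (∑' n, fby n) = ∑' p, F p := by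
    rw [e1, e2, Summable.tsum_sub sp1 sp2]
  -- swap
  have sF' : Summable (fun p : ℕ × ℕ => F (Prod.swap p)) :=
    ((Equiv.prodComm ℕ ℕ).summable_iff.2 sF)
  have eswap : ∑' p : ℕ × ℕ, F (Prod.swap p) = ∑' p, F p :=
    (Equiv.prodComm ℕ ℕ).tsum_eq F
  set G : ℕ × ℕ → ℝ := fun p => F p + F (Prod.swap p) with hG
  have sG : Summable G := sF.add sF'
  have eG : ∑' p, G p = 2 * ∑' p, F p := by
    rw [hG, Summable.tsum_add sF sF', eswap]; ring
  have hGform : ∀ p : ℕ × ℕ, G p =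
      (coA s aa K p.1 * coB s aa p.2 - coA s aa K p.2 * coB s aa p.1)
        * (y ^ p.1 * x ^ p.2 - x ^ p.1 * y ^ p.2) := by
    intro p; simp only [hG, hF, hfax, hfay, hfbx, hfby, Prod.fst_swap, Prod.snd_swap]; ring
  have hGnn : ∀ p : ℕ × ℕ, 0 ≤ G p := by
    intro ⟨m, n⟩
    rw [hGform]
    rcases lt_trichotomy m n with h | h | h
    · apply mul_nonneg_of_nonpos_of_nonpos
      · simp only
        have := cross hs0 has hs1 hK h
        linarith
      · simp only
        have := pow_cross hx hxy h
        linarith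
    · subst h; simp
    · apply mul_nonneg
      · simp only
        have := cross hs0 has hs1 hK h
        linarith
      · simp only
        have := pow_cross hx hxy h
        linarith
  have hG10 : 0 < G (1, 0) := by
    rw [hGform]
    apply mul_pos
    · simp only
      have := cross hs0 has hs1 hK (Nat.zero_lt_one)
      linarith
    · simp only
      have := pow_cross hx hxy (Nat.zero_lt_one)
      linarith
  have hGpos : 0 < ∑' p, G p := Summable.tsum_pos sG hGnn (1, 0) hG10
  have hFpos : 0 < ∑' p, F p := by linarith [eG ▸ hGpos]
  linarith [eF ▸ hFpos]

theorem hyperg_ratio_strictMono_Ek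
    (α β : ℝ) (hβ : -1 < β) (hβα : β < α) (hα : α < 0)
    (k : ℕ) (hk : 1 ≤ k) :
    StrictMonoOn
      (fun t : ℝ => hyperg (-β) ((k : ℝ) - α) ((k : ℝ) + 1) t / hyperg (-α) (1 - β) 2 t)
      (Set.Ioo (0 : ℝ) 1) := by
  have hs0 : (0:ℝ) < -α := by linarith
  have has : -α < -β := by linarith
  have hs1 : -β < 1 := by linarith
  have hK : (1:ℝ) ≤ (k:ℝ) := by exact_mod_cast hk
  have ea : ∀ t : ℝ, hyperg (-β) ((k : ℝ) - α) ((k : ℝ) + 1) t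
      = ∑' n, coA (-β) (-α) (k:ℝ) n * t ^ n := by
    intro t
    rw [show (k:ℝ) - α = (k:ℝ) + -α from sub_eq_add_neg _ _]
    rfl
  have eb : ∀ t : ℝ, hyperg (-α) (1 - β) 2 t = ∑' n, coB (-β) (-α) n * t ^ n := by
    intro t
    rw [show (1:ℝ) - β = 1 + -β from sub_eq_add_neg _ _]
    rfl
  intro x hx y hy hxy
  obtain ⟨hx0, hx1⟩ := hx
  obtain ⟨hy0, hy1⟩ := hy
  simp only [ea, eb]
  have hBnn : ∀ n, 0 ≤ coB (-β) (-α) n := fun n => (coB_pos hs0 has hs1 hK n).le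
  have gpos : ∀ t : ℝ, 0 < t → t < 1 → 0 < ∑' n, coB (-β) (-α) n * t ^ n := by
    intro t ht0 ht1
    apply Summable.tsum_pos (summable_coeff hBnn (coB_le_one hs0 has hs1 hK)
      (by rw [abs_of_pos ht0]; exact ht1)) (fun n => mul_nonneg (hBnn n) (by positivity)) 0
    have : coB (-β) (-α) 0 = 1 := by simp [coB, poch]
    simp [this]
  rw [div_lt_div_iff₀ (gpos x hx0 hx1) (gpos y hy0 hy1)]
  exact key_ineq hs0 has hs1 hK hx0 hxy hy1
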